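/- (Principle of nil causality, Theorem 2.) Let d ≥ 3, let ρ be a probability density on ℝ^d with first-coordinate marginal ρ₁ > 0 almost everywhere, and let F₁, g₁₁ : ℝ^d → ℝ be functions that do not depend on the variable x₂, so they may be regarded as functions of (x₁, x₃, …, x_d). Assume: (i) for almost every (x₃,…,x_d), the map x₁ ↦ F₁·ρ_{∖2} is continuously differentiable and tends to 0 as x₁ → ±∞, and the map x₁ ↦ g₁₁·ρ_{∖2} is twice continuously differentiable with first x₁-derivative tending to 0 as x₁ → ±∞; (ii) ∂(F₁ρ_{∖2})/∂x₁ and ∂²(g₁₁ρ_{∖2})/∂x₁² are integrable on ℝ^{d-1}, and ρ_{2|1}(x₂|x₁)·∂(F₁ρ_{∖2})/∂x₁ and ρ_{2|1}(x₂|x₁)·∂²(g₁₁ρ_{∖2})/∂x₁² are integrable on ℝ^d. Then T_{2→1} = −∫_{ℝ^d} ρ_{2|1}(x₂|x₁) ∂(F₁ρ_{∖2})/∂x₁ dx + (1/2)∫_{ℝ^d} ρ_{2|1}(x₂|x₁) ∂²(g₁₁ρ_{∖2})/∂x₁² dx = 0. -/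

import Mathlib

open MeasureTheory Filter

noncomputable section

/-- Marginal density of the first coordinate. -/
def rho1 {m : ℕ} (ρ : ℝ × ℝ × (Fin m → ℝ) → ℝ) (x₁ : ℝ) : ℝ :=
  ∫ p : ℝ × (Fin m → ℝ), ρ (x₁, p)

/-- Joint marginal density of the first two coordinates. -/
def rho12 {m : ℕ} (ρ : ℝ × ℝ × (Fin m → ℝ) → ℝ) (x₁ x₂ : ℝ) : ℝ :=
  ∫ y : Fin m → ℝ, ρ (x₁, x₂, y)

/-- Conditional density of the second coordinate given the first. -/
def rho2c {m : ℕ} (ρ : ℝ × ℝ × (Fin m → ℝ) → ℝ) (x₁ x₂ : ℝ) : ℝ :=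
  rho12 ρ x₁ x₂ / rho1 ρ x₁

/-- Marginal density with x₂ integrated out: ρ_{∖2}(x₁,x₃,…,x_d) = ∫ ρ dx₂. -/
def rhoM2 {m : ℕ} (ρ : ℝ × ℝ × (Fin m → ℝ) → ℝ) (x₁ : ℝ) (y : Fin m → ℝ) : ℝ :=
  ∫ x₂ : ℝ, ρ (x₁, x₂, y)

/-- FTC on the whole line: the integral of the derivative of a differentiable
function vanishing at `±∞`, with integrable derivative, is zero. -/
lemma my_integral_deriv_eq_zero (f : ℝ → ℝ) (hf : Differentiable ℝ f)
    (hint : Integrable (deriv f)) (htop : Tendsto f atTop (nhds 0))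
    (hbot : Tendsto f atBot (nhds 0)) : ∫ x : ℝ, deriv f x = 0 := by
  simpa using MeasureTheory.integral_of_hasDerivAt_of_tendsto
    (fun x => (hf x).hasDerivAt) hint hbot htop

/-- If a.e. slices integrate to zero, the full integral is zero. -/
lemma my_integral_prod_zero {m : ℕ} (φ : ℝ × (Fin m → ℝ) → ℝ) (hφ : Integrable φ)
    (h0 : ∀ᵐ y : Fin m → ℝ, ∫ x : ℝ, φ (x, y) = 0) : ∫ p, φ p = 0 := by
  rw [MeasureTheory.Measure.volume_eq_prod] at hφ ⊢
  rw [MeasureTheory.integral_prod_symm _ hφ]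
  rw [integral_congr_ae h0, integral_zero]

/-- Integrating the conditional density `rho2c` against a function not depending
on `x₂` just removes the `x₂` variable. -/
lemma my_cond_integral_eq {m : ℕ} (ρ : ℝ × ℝ × (Fin m → ℝ) → ℝ)
    (hρ_int : Integrable ρ)
    (hρ1_pos : ∀ᵐ x₁ : ℝ, 0 < rho1 ρ x₁)
    (φ : ℝ × (Fin m → ℝ) → ℝ) (hφ : Integrable φ)
    (hint : Integrable (fun x : ℝ × ℝ × (Fin m → ℝ) => rho2c ρ x.1 x.2.1 * φ (x.1, x.2.2))) :
    ∫ x : ℝ × ℝ × (Fin m → ℝ), rho2c ρ x.1 x.2.1 * φ (x.1, x.2.2)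
      = ∫ p : ℝ × (Fin m → ℝ), φ p := by
  rw [MeasureTheory.Measure.volume_eq_prod] at hρ_int hφ hint ⊢
  rw [MeasureTheory.integral_prod _ hint]
  have hslice : ∀ᵐ x₁ : ℝ, Integrable (fun p : ℝ × (Fin m → ℝ) => ρ (x₁, p)) :=
    hρ_int.prod_right_ae
  have key : ∀ᵐ x₁ : ℝ,
      (∫ p : ℝ × (Fin m → ℝ), rho2c ρ x₁ p.1 * φ (x₁, p.2))
        = ∫ y : Fin m → ℝ, φ (x₁, y) := by
    filter_upwards [hρ1_pos, hslice] with x₁ hpos hsl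
    have h1 : (∫ p : ℝ × (Fin m → ℝ), rho2c ρ x₁ p.1 * φ (x₁, p.2))
        = (∫ x₂ : ℝ, rho2c ρ x₁ x₂) * ∫ y : Fin m → ℝ, φ (x₁, y) := by
      rw [MeasureTheory.Measure.volume_eq_prod]
      exact MeasureTheory.integral_prod_mul (μ := volume) (ν := volume)
        (fun x₂ => rho2c ρ x₁ x₂) (fun y => φ (x₁, y))
    have h2 : (∫ x₂ : ℝ, rho12 ρ x₁ x₂) = rho1 ρ x₁ := by
      rw [MeasureTheory.Measure.volume_eq_prod] at hsl
      have := MeasureTheory.integral_prod _ hsl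
      simp only [rho12, rho1]
      rw [MeasureTheory.Measure.volume_eq_prod (α := ℝ) (β := Fin m → ℝ)]
      exact this.symm
    have h3 : (∫ x₂ : ℝ, rho2c ρ x₁ x₂) = 1 := by
      simp only [rho2c]
      rw [integral_div, h2, div_self hpos.ne']
    rw [h1, h3, one_mul]
  rw [integral_congr_ae key]
  exact (MeasureTheory.integral_integral (f := fun a b => φ (a, b)) hφ)

/-- Principle of nil causality.  If F₁ and g₁₁ do not depend on x₂
(hence are given as functions of (x₁, x₃,…,x_d)), then under the stated smoothness,
decay and integrability assumptions, the information flow T_{2→1} vanishes. -/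
theorem nil_causality
    (m : ℕ) (hm : 1 ≤ m)
    (ρ : ℝ × ℝ × (Fin m → ℝ) → ℝ)
    (hρ_meas : Measurable ρ)
    (hρ_nonneg : ∀ x, 0 ≤ ρ x)
    (hρ_int : Integrable ρ)
    (hρ_prob : ∫ x : ℝ × ℝ × (Fin m → ℝ), ρ x = 1)
    (hρ1_pos : ∀ᵐ x₁ : ℝ, 0 < rho1 ρ x₁)
    -- F₁ and g₁₁ do not depend on x₂: they are functions of (x₁, x₃, …, x_d)
    (F₁ g₁₁ : ℝ → (Fin m → ℝ) → ℝ)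
    -- (i) smoothness and decay, for almost every (x₃,…,x_d):
    (hF_smooth : ∀ᵐ y : Fin m → ℝ, ContDiff ℝ 1 (fun t => F₁ t y * rhoM2 ρ t y))
    (hF_decay_top : ∀ᵐ y : Fin m → ℝ,
      Tendsto (fun t => F₁ t y * rhoM2 ρ t y) atTop (nhds 0))
    (hF_decay_bot : ∀ᵐ y : Fin m → ℝ,
      Tendsto (fun t => F₁ t y * rhoM2 ρ t y) atBot (nhds 0))
    (hg_smooth : ∀ᵐ y : Fin m → ℝ, ContDiff ℝ 2 (fun t => g₁₁ t y * rhoM2 ρ t y))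
    (hg_decay_top : ∀ᵐ y : Fin m → ℝ,
      Tendsto (deriv (fun t => g₁₁ t y * rhoM2 ρ t y)) atTop (nhds 0))
    (hg_decay_bot : ∀ᵐ y : Fin m → ℝ,
      Tendsto (deriv (fun t => g₁₁ t y * rhoM2 ρ t y)) atBot (nhds 0))
    -- (ii) integrability on ℝ^{d-1}:
    (hF_int : Integrable (fun p : ℝ × (Fin m → ℝ) =>
      deriv (fun t => F₁ t p.2 * rhoM2 ρ t p.2) p.1))
    (hg_int : Integrable (fun p : ℝ × (Fin m → ℝ) =>
      deriv (deriv (fun t => g₁₁ t p.2 * rhoM2 ρ t p.2)) p.1))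
    -- (ii) integrability on ℝ^d:
    (hF_int' : Integrable (fun x : ℝ × ℝ × (Fin m → ℝ) =>
      rho2c ρ x.1 x.2.1 * deriv (fun t => F₁ t x.2.2 * rhoM2 ρ t x.2.2) x.1))
    (hg_int' : Integrable (fun x : ℝ × ℝ × (Fin m → ℝ) =>
      rho2c ρ x.1 x.2.1 * deriv (deriv (fun t => g₁₁ t x.2.2 * rhoM2 ρ t x.2.2)) x.1)) :
    -(∫ x : ℝ × ℝ × (Fin m → ℝ),
        rho2c ρ x.1 x.2.1 * deriv (fun t => F₁ t x.2.2 * rhoM2 ρ t x.2.2) x.1)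
      + (1/2) * ∫ x : ℝ × ℝ × (Fin m → ℝ),
        rho2c ρ x.1 x.2.1 * deriv (deriv (fun t => g₁₁ t x.2.2 * rhoM2 ρ t x.2.2)) x.1
      = 0 := by
  have hFi : Integrable (fun p : ℝ × (Fin m → ℝ) =>
      deriv (fun t => F₁ t p.2 * rhoM2 ρ t p.2) p.1)
      ((volume : Measure ℝ).prod volume) := by
    rw [← MeasureTheory.Measure.volume_eq_prod]; exact hF_int
  have hgi : Integrable (fun p : ℝ × (Fin m → ℝ) =>
      deriv (deriv (fun t => g₁₁ t p.2 * rhoM2 ρ t p.2)) p.1)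
      ((volume : Measure ℝ).prod volume) := by
    rw [← MeasureTheory.Measure.volume_eq_prod]; exact hg_int
  have hFzero : (∫ p : ℝ × (Fin m → ℝ),
      deriv (fun t => F₁ t p.2 * rhoM2 ρ t p.2) p.1) = 0 := by
    apply my_integral_prod_zero _ hF_int
    filter_upwards [hF_smooth, hF_decay_top, hF_decay_bot, hFi.prod_left_ae]
      with y hs ht hb hi
    exact my_integral_deriv_eq_zero _ (hs.differentiable one_ne_zero) hi ht hb
  have hgzero : (∫ p : ℝ × (Fin m → ℝ),
      deriv (deriv (fun t => g₁₁ t p.2 * rhoM2 ρ t p.2)) p.1) = 0 := by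
    apply my_integral_prod_zero _ hg_int
    filter_upwards [hg_smooth, hg_decay_top, hg_decay_bot, hgi.prod_left_ae]
      with y hs ht hb hi
    have hs2 : ContDiff ℝ ((1 : ℕ∞) + 1) (fun t => g₁₁ t y * rhoM2 ρ t y) := by
      exact_mod_cast hs
    have hd : Differentiable ℝ (deriv (fun t => g₁₁ t y * rhoM2 ρ t y)) :=
      (contDiff_succ_iff_deriv.mp hs2).2.2.differentiable (by simp)
    exact my_integral_deriv_eq_zero _ hd hi ht hb
  have hA : (∫ x : ℝ × ℝ × (Fin m → ℝ),
      rho2c ρ x.1 x.2.1 * deriv (fun t => F₁ t x.2.2 * rhoM2 ρ t x.2.2) x.1) = 0 := by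
    have := my_cond_integral_eq ρ hρ_int hρ1_pos
      (fun p => deriv (fun t => F₁ t p.2 * rhoM2 ρ t p.2) p.1) hF_int hF_int'
    rw [this, hFzero]
  have hB : (∫ x : ℝ × ℝ × (Fin m → ℝ),
      rho2c ρ x.1 x.2.1 * deriv (deriv (fun t => g₁₁ t x.2.2 * rhoM2 ρ t x.2.2)) x.1) = 0 := by
    have := my_cond_integral_eq ρ hρ_int hρ1_pos
      (fun p => deriv (deriv (fun t => g₁₁ t p.2 * rhoM2 ρ t p.2)) p.1) hg_int hg_int'
    rw [this, hgzero]
  rw [hA, hB]; ring
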